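/- arXiv:2101.11086 — 2 statements merged into one kernel-verified Lean document; each statement's English description precedes it below -/
import Mathlib

section
/- For any real numbers t, u and η, the absolute difference |P(N(u,1) ≤ t) − P(N((1+η)u,1) ≤ t)| between the CDFs at t of a standard-variance Gaussian with mean u and one with mean (1+η)u is at most 2(1+|t|)·|η|. -/
open MeasureTheory ProbabilityTheory Real

private lemma stdpdf_eq (x : ℝ) :
    gaussianPDFReal 0 1 x = (Real.sqrt (2 * π))⁻¹ * Real.exp (-x ^ 2 / 2) := by
  simp [gaussianPDFReal]

private lemma sqrt_two_pi_ge_two : (2 : ℝ) ≤ Real.sqrt (2 * π) := by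
  have h1 : (4:ℝ) ≤ 2 * π := by nlinarith [Real.pi_gt_three]
  nlinarith [Real.sq_sqrt (show (0:ℝ) ≤ 2 * π by positivity), Real.sqrt_nonneg (2 * π)]

private lemma stdpdf_le_half (x : ℝ) : gaussianPDFReal 0 1 x ≤ 1 / 2 := by
  rw [stdpdf_eq]
  have h1 : Real.exp (-x ^ 2 / 2) ≤ 1 := by
    rw [Real.exp_le_one_iff]; nlinarith [sq_nonneg x]
  have h2 : (Real.sqrt (2 * π))⁻¹ ≤ 1 / 2 := by
    rw [inv_le_comm₀ (by nlinarith [sqrt_two_pi_ge_two]) (by norm_num)]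
    simpa [one_div, inv_inv] using sqrt_two_pi_ge_two
  have h3 : (0:ℝ) ≤ (Real.sqrt (2 * π))⁻¹ := by positivity
  nlinarith [Real.exp_pos (-x ^ 2 / 2)]

private lemma abs_mul_stdpdf_le_one (x : ℝ) : |x| * gaussianPDFReal 0 1 x ≤ 1 := by
  rw [stdpdf_eq]
  have h1 : |x| ≤ Real.exp (x ^ 2 / 2) := by
    have := Real.add_one_le_exp (x ^ 2 / 2)
    nlinarith [sq_nonneg (|x| - 1), sq_abs x]
  have h2 : (Real.sqrt (2 * π))⁻¹ ≤ 1 := by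
    rw [inv_le_one_iff₀]; right; nlinarith [sqrt_two_pi_ge_two]
  have h3 : (0:ℝ) < Real.sqrt (2 * π) := by nlinarith [sqrt_two_pi_ge_two]
  have h4 : Real.exp (x ^ 2 / 2) * Real.exp (-x ^ 2 / 2) = 1 := by
    rw [← Real.exp_add]; ring_nf; exact Real.exp_zero
  have h5 : (0:ℝ) < Real.exp (-x ^ 2 / 2) := Real.exp_pos _
  calc |x| * ((Real.sqrt (2 * π))⁻¹ * Real.exp (-x ^ 2 / 2))
      ≤ Real.exp (x ^ 2 / 2) * (1 * Real.exp (-x ^ 2 / 2)) := by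
        apply mul_le_mul h1 _ (by positivity) (le_of_lt (Real.exp_pos _))
        apply mul_le_mul_of_nonneg_right h2 h5.le
    _ = 1 := by rw [one_mul, h4]

private lemma stdpdf_anti {x y : ℝ} (h : |x| ≤ |y|) :
    gaussianPDFReal 0 1 y ≤ gaussianPDFReal 0 1 x := by
  rw [stdpdf_eq, stdpdf_eq]
  have : Real.exp (-y ^ 2 / 2) ≤ Real.exp (-x ^ 2 / 2) := by
    apply Real.exp_le_exp.mpr
    have : x ^ 2 ≤ y ^ 2 := by rw [← sq_abs x, ← sq_abs y]; nlinarith [abs_nonneg x]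
    linarith
  exact mul_le_mul_of_nonneg_left this (by positivity)

private lemma gaussianReal_Iic_shift (μ t : ℝ) :
    (gaussianReal μ 1) (Set.Iic t) = (gaussianReal 0 1) (Set.Iic (t - μ)) := by
  have h := gaussianReal_map_add_const (μ := 0) (v := 1) μ
  rw [zero_add] at h
  rw [← h, Measure.map_apply (measurable_add_const μ) measurableSet_Iic]
  congr 1
  ext x
  simp [sub_eq_add_neg, le_sub_iff_add_le]

private lemma cdf_diff_le (a b M : ℝ) (hab : a ≤ b) (hM0 : 0 ≤ M)
    (hM : ∀ x ∈ Set.Ioc a b, gaussianPDFReal 0 1 x ≤ M) :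
    |((gaussianReal 0 1) (Set.Iic a)).toReal -
      ((gaussianReal 0 1) (Set.Iic b)).toReal| ≤ M * (b - a) := by
  have hv : (1 : NNReal) ≠ 0 := by norm_num
  have hunion : (gaussianReal 0 1) (Set.Iic b)
      = (gaussianReal 0 1) (Set.Iic a) + (gaussianReal 0 1) (Set.Ioc a b) := by
    rw [← measure_union (Set.Iic_disjoint_Ioc le_rfl) measurableSet_Ioc,
      Set.Iic_union_Ioc_eq_Iic hab]
  have hfin1 : (gaussianReal 0 1) (Set.Iic a) ≠ ⊤ := measure_ne_top _ _
  have hfin2 : (gaussianReal 0 1) (Set.Ioc a b) ≠ ⊤ := measure_ne_top _ _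
  have htr : ((gaussianReal 0 1) (Set.Iic b)).toReal
      = ((gaussianReal 0 1) (Set.Iic a)).toReal
        + ((gaussianReal 0 1) (Set.Ioc a b)).toReal := by
    rw [hunion, ENNReal.toReal_add hfin1 hfin2]
  have hioc : ((gaussianReal 0 1) (Set.Ioc a b)).toReal
      = ∫ x in Set.Ioc a b, gaussianPDFReal 0 1 x := by
    rw [gaussianReal_apply_eq_integral 0 hv, ENNReal.toReal_ofReal]
    exact setIntegral_nonneg measurableSet_Ioc fun x _ => gaussianPDFReal_nonneg 0 1 x
  have hbound : ∫ x in Set.Ioc a b, gaussianPDFReal 0 1 x ≤ M * (b - a) := by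
    have hint : IntegrableOn (gaussianPDFReal 0 1) (Set.Ioc a b) volume :=
      (integrable_gaussianPDFReal 0 1).integrableOn
    have hintc : IntegrableOn (fun _ : ℝ => M) (Set.Ioc a b) volume := by
      apply (integrableOn_const_iff (C := M) enorm_ne_top).mpr
      right
      rw [Real.volume_Ioc]
      exact ENNReal.ofReal_lt_top
    calc ∫ x in Set.Ioc a b, gaussianPDFReal 0 1 x
        ≤ ∫ _x in Set.Ioc a b, M := setIntegral_mono_on hint hintc measurableSet_Ioc hM
      _ = (volume (Set.Ioc a b)).toReal * M := by rw [setIntegral_const]; rfl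
      _ = M * (b - a) := by
          rw [Real.volume_Ioc, ENNReal.toReal_ofReal (by linarith)]; ring
  have hnonneg : 0 ≤ ((gaussianReal 0 1) (Set.Ioc a b)).toReal := ENNReal.toReal_nonneg
  rw [abs_sub_comm, abs_of_nonneg (by linarith)]
  linarith

private lemma cdf_diff_le' (a b M B : ℝ) (hM0 : 0 ≤ M)
    (hM : ∀ x, min a b ≤ x → x ≤ max a b → gaussianPDFReal 0 1 x ≤ M)
    (hB : M * |a - b| ≤ B) :
    |((gaussianReal 0 1) (Set.Iic a)).toReal -
      ((gaussianReal 0 1) (Set.Iic b)).toReal| ≤ B := by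
  rcases le_total a b with h | h
  · have := cdf_diff_le a b M h hM0 (fun x hx => hM x
      (by rw [min_eq_left h]; exact hx.1.le) (by rw [max_eq_right h]; exact hx.2))
    have habs : |a - b| = b - a := by rw [abs_sub_comm]; exact abs_of_nonneg (by linarith)
    linarith [this, hB, habs ▸ hB]
  · rw [abs_sub_comm]
    have := cdf_diff_le b a M h hM0 (fun x hx => hM x
      (by rw [min_eq_right h]; exact hx.1.le) (by rw [max_eq_left h]; exact hx.2))
    have habs : |a - b| = a - b := abs_of_nonneg (by linarith)
    rw [habs] at hB
    linarith

/-- Le Cam mean-shift lemma: for any real `t`, `u`, `η`, the Gaussian CDFs with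
means `u` and `(1+η)·u` (variance 1) at `t` differ by at most `2(1+|t|)·|η|`. -/
theorem gaussian_cdf_mean_scale_diff (t u η : ℝ) :
    |((gaussianReal u 1) (Set.Iic t)).toReal -
      ((gaussianReal ((1 + η) * u) 1) (Set.Iic t)).toReal| ≤ 2 * (1 + |t|) * |η| := by
  rw [gaussianReal_Iic_shift u t, gaussianReal_Iic_shift ((1 + η) * u) t]
  set a := t - u with ha
  set b := t - (1 + η) * u with hb
  have hab : a - b = η * u := by rw [ha, hb]; ring
  have ht0 : (0:ℝ) ≤ |t| := abs_nonneg t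
  have hη0 : (0:ℝ) ≤ |η| := abs_nonneg η
  rcases le_or_gt 1 (2 * (1 + |t|) * |η|) with hbig | hsmall
  · -- trivial case: both CDF values are in [0, 1]
    have h1 : ∀ s : Set ℝ, ((gaussianReal 0 1) s).toReal ≤ 1 := fun s => by
      have := prob_le_one (μ := gaussianReal 0 1) (s := s)
      simpa using ENNReal.toReal_mono (by simp) this
    have h2 : ∀ s : Set ℝ, 0 ≤ ((gaussianReal 0 1) s).toReal := fun s => ENNReal.toReal_nonneg
    rw [abs_sub_le_iff]
    constructor <;> linarith [h1 (Set.Iic a), h1 (Set.Iic b), h2 (Set.Iic a), h2 (Set.Iic b)]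
  · have hηhalf : |η| < 1 / 2 := by nlinarith
    have habsab : |a - b| = |η| * |u| := by rw [hab, abs_mul]
    rcases le_or_gt |u| (4 * (1 + |t|)) with husmall | hubig
    · -- small |u|: use global density bound 1/2
      apply cdf_diff_le' a b (1/2) _ (by norm_num)
        (fun x _ _ => stdpdf_le_half x)
      rw [habsab]
      nlinarith
    · -- large |u|: interval is far from 0
      set c := |u| / 2 - |t| with hc
      have hc0 : 0 ≤ c := by rw [hc]; nlinarith
      have hint : ∀ x, min a b ≤ x → x ≤ max a b → gaussianPDFReal 0 1 x ≤ gaussianPDFReal 0 1 c := by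
        intro x hx1 hx2
        apply stdpdf_anti
        rw [abs_of_nonneg hc0]
        -- |x - a| ≤ max - min = |a - b|
        have hma : min a b ≤ a := min_le_left a b
        have hMa : a ≤ max a b := le_max_left a b
        have hxa : |x - a| ≤ |a - b| := by
          have hd : max a b - min a b = |a - b| := by rw [abs_sub_comm]; exact max_sub_min_eq_abs a b
          rw [abs_le]
          constructor <;> [linarith [hx1, hMa, hd]; linarith [hx2, hma, hd]]
        have h1 : |u| - |t| ≤ |a| := by
          have := abs_sub_abs_le_abs_sub u t
          rw [ha, abs_sub_comm]
          linarith
        have h2 : |a| - |x| ≤ |x - a| := by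
          have h := abs_sub_abs_le_abs_sub a x
          have h' : |a - x| = |x - a| := abs_sub_comm a x
          linarith
        have h3 : |a - b| ≤ |u| / 2 := by
          rw [habsab]
          nlinarith
        rw [hc]
        linarith
      apply cdf_diff_le' a b (gaussianPDFReal 0 1 c) _ (gaussianPDFReal_nonneg 0 1 c) hint
      rw [habsab]
      have k1 : c * gaussianPDFReal 0 1 c ≤ 1 := by
        have := abs_mul_stdpdf_le_one c
        rwa [abs_of_nonneg hc0] at this
      have k2 : gaussianPDFReal 0 1 c ≤ 1 / 2 := stdpdf_le_half c
      have k3 : 0 ≤ gaussianPDFReal 0 1 c := gaussianPDFReal_nonneg 0 1 c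
      have k4 : |u| = 2 * c + 2 * |t| := by rw [hc]; ring
      rw [k4]
      have m1 : |η| * (c * gaussianPDFReal 0 1 c) ≤ |η| * 1 :=
        mul_le_mul_of_nonneg_left k1 hη0
      have m2 : (|η| * |t|) * gaussianPDFReal 0 1 c ≤ (|η| * |t|) * (1 / 2) :=
        mul_le_mul_of_nonneg_left k2 (mul_nonneg hη0 ht0)
      nlinarith [mul_nonneg hη0 ht0]
end

section
/- Let Z ∈ ℝ^{N×p} have i.i.d. standard Gaussian entries and let A ∈ ℝ^{p×p}. Then E‖ZA‖_F⁴ ≤ 4N‖A^T A‖_F² + N²‖A‖_F⁴ ≤ 5N²‖A‖_F⁴. -/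
open MeasureTheory ProbabilityTheory Matrix Real Set
open scoped NNReal ENNReal

noncomputable section

/-- n-th moment of the standard gaussian. -/
def Mom (n : ℕ) : ℝ := ∫ x : ℝ, x ^ n ∂(gaussianReal 0 1)

lemma gaussianReal_std_eq :
    gaussianReal 0 1 = MeasureTheory.volume.withDensity
      (fun x => ((Real.toNNReal (gaussianPDFReal 0 1 x) : ℝ≥0) : ℝ≥0∞)) := by
  rw [gaussianReal_of_var_ne_zero _ one_ne_zero]
  rfl

lemma pdf_smul (n : ℕ) (x : ℝ) :
    (Real.toNNReal (gaussianPDFReal 0 1 x) : ℝ≥0) • (x ^ n) =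
      (Real.sqrt (2 * π))⁻¹ * (x ^ n * Real.exp (-(2⁻¹) * x ^ 2)) := by
  rw [NNReal.smul_def, smul_eq_mul,
    Real.coe_toNNReal _ (gaussianPDFReal_nonneg 0 1 x)]
  unfold gaussianPDFReal
  push_cast
  rw [mul_one]
  ring_nf

lemma integrable_pow_mul_exp (n : ℕ) :
    Integrable (fun x : ℝ => x ^ n * Real.exp (-(2⁻¹) * x ^ 2)) := by
  have h := integrable_rpow_mul_exp_neg_mul_sq (b := 2⁻¹) (by norm_num) (s := n)
    (lt_of_lt_of_le neg_one_lt_zero (Nat.cast_nonneg n))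
  simpa [Real.rpow_natCast] using h

lemma integrable_pow_gauss (n : ℕ) :
    Integrable (fun x : ℝ => x ^ n) (gaussianReal 0 1) := by
  rw [gaussianReal_std_eq,
    integrable_withDensity_iff_integrable_smul
      ((measurable_gaussianPDFReal 0 1).real_toNNReal)]
  have : (fun x : ℝ => (Real.toNNReal (gaussianPDFReal 0 1 x) : ℝ≥0) • (x ^ n))
      = fun x => (Real.sqrt (2 * π))⁻¹ * (x ^ n * Real.exp (-(2⁻¹) * x ^ 2)) := by
    funext x; exact pdf_smul n x
  rw [this]
  exact (integrable_pow_mul_exp n).const_mul _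

lemma Mom_eq (n : ℕ) :
    Mom n = (Real.sqrt (2 * π))⁻¹ * ∫ x : ℝ, x ^ n * Real.exp (-(2⁻¹) * x ^ 2) := by
  rw [Mom, gaussianReal_std_eq,
    integral_withDensity_eq_integral_smul
      ((measurable_gaussianPDFReal 0 1).real_toNNReal)]
  simp_rw [pdf_smul]
  rw [integral_const_mul]

end
noncomputable section

def JJ (n : ℕ) : ℝ := ∫ x : ℝ, x ^ n * Real.exp (-(2⁻¹) * x ^ 2)

lemma JJ_odd (n : ℕ) (hn : ¬ Even n) : JJ n = 0 := by
  have A : MeasurableEmbedding (fun x : ℝ => -x) :=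
    (Homeomorph.neg ℝ).isClosedEmbedding.measurableEmbedding
  have h1 : JJ n = ∫ x : ℝ, (-x) ^ n * Real.exp (-(2⁻¹) * (-x) ^ 2) := by
    rw [JJ]
    nth_rewrite 1 [← Measure.map_neg_eq_self (volume : Measure ℝ)]
    rw [A.integral_map]
  have h2 : ∀ x : ℝ, (-x) ^ n * Real.exp (-(2⁻¹) * (-x) ^ 2)
      = -(x ^ n * Real.exp (-(2⁻¹) * x ^ 2)) := by
    intro x
    rw [(Odd.neg_pow (Nat.not_even_iff_odd.1 hn)), neg_sq, neg_mul]
  simp_rw [h2, integral_neg] at h1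
  have : JJ n = - JJ n := h1
  linarith

lemma JJ_even (n : ℕ) (hn : Even n) :
    JJ n = 2 * ((2⁻¹ : ℝ) ^ (-((n : ℝ) + 1) / 2) * (1 / 2) * Real.Gamma (((n : ℝ) + 1) / 2)) := by
  have habs : ∀ x : ℝ, |x| ^ n * Real.exp (-(2⁻¹) * |x| ^ 2)
      = x ^ n * Real.exp (-(2⁻¹) * x ^ 2) := by
    intro x; rw [hn.pow_abs, sq_abs]
  have h1 : JJ n = 2 * ∫ x in Ioi (0:ℝ), x ^ n * Real.exp (-(2⁻¹) * x ^ 2) := by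
    rw [JJ, ← integral_comp_abs (f := fun x => x ^ n * Real.exp (-(2⁻¹) * x ^ 2))]
    simp_rw [habs]
  rw [h1]
  congr 1
  rw [← integral_rpow_mul_exp_neg_mul_rpow (p := 2) (q := (n:ℝ)) (b := 2⁻¹) two_pos
    (lt_of_lt_of_le neg_one_lt_zero (Nat.cast_nonneg n)) (by norm_num)]
  refine setIntegral_congr_fun measurableSet_Ioi (fun x hx => ?_)
  rw [Real.rpow_natCast, Real.rpow_two]

lemma Gamma_three_halves : Real.Gamma (3 / 2) = Real.sqrt π / 2 := by
  have : (3 : ℝ) / 2 = 1 / 2 + 1 := by norm_num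
  rw [this, Real.Gamma_add_one (by norm_num), Real.Gamma_one_half_eq]
  ring

lemma Gamma_five_halves : Real.Gamma (5 / 2) = 3 * Real.sqrt π / 4 := by
  have : (5 : ℝ) / 2 = 3 / 2 + 1 := by norm_num
  rw [this, Real.Gamma_add_one (by norm_num), Gamma_three_halves]
  ring

lemma rpow_inv_neg (y : ℝ) : (2⁻¹ : ℝ) ^ (-y) = (2:ℝ) ^ y := by
  rw [Real.inv_rpow (le_of_lt two_pos), ← Real.rpow_neg (le_of_lt two_pos), neg_neg]

lemma two_rpow_three_halves : (2:ℝ) ^ ((3:ℝ)/2) = 2 * (2:ℝ) ^ ((1:ℝ)/2) := by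
  rw [show (3:ℝ)/2 = 1/2 + 1 by norm_num, Real.rpow_add two_pos, Real.rpow_one]; ring

lemma two_rpow_five_halves : (2:ℝ) ^ ((5:ℝ)/2) = 4 * (2:ℝ) ^ ((1:ℝ)/2) := by
  rw [show (5:ℝ)/2 = 1/2 + 2 by norm_num, Real.rpow_add two_pos, Real.rpow_two]; ring

lemma sqrt_two_pi_eq : Real.sqrt (2 * π) = (2:ℝ) ^ ((1:ℝ)/2) * Real.sqrt π := by
  rw [Real.sqrt_mul (by norm_num), Real.sqrt_eq_rpow]

lemma aux_pos : 0 < (2:ℝ) ^ ((1:ℝ)/2) * Real.sqrt π := by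
  have := Real.pi_pos
  positivity

lemma Mom_two : Mom 2 = 1 := by
  have h := JJ_even 2 (by norm_num)
  rw [show -(((2:ℕ) : ℝ) + 1) / 2 = -((3:ℝ)/2) by norm_num, rpow_inv_neg,
    show (((2:ℕ) : ℝ) + 1) / 2 = 3/2 by norm_num, Gamma_three_halves,
    two_rpow_three_halves] at h
  rw [Mom_eq, sqrt_two_pi_eq]
  rw [show (∫ x : ℝ, x ^ 2 * Real.exp (-(2⁻¹) * x ^ 2)) = JJ 2 from rfl, h]
  have hpos := aux_pos
  field_simp

lemma Mom_four : Mom 4 = 3 := by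
  have h := JJ_even 4 (by decide)
  rw [show -(((4:ℕ) : ℝ) + 1) / 2 = -((5:ℝ)/2) by norm_num, rpow_inv_neg,
    show (((4:ℕ) : ℝ) + 1) / 2 = 5/2 by norm_num, Gamma_five_halves,
    two_rpow_five_halves] at h
  rw [Mom_eq, sqrt_two_pi_eq]
  rw [show (∫ x : ℝ, x ^ 4 * Real.exp (-(2⁻¹) * x ^ 2)) = JJ 4 from rfl, h]
  have hpos := aux_pos
  field_simp

lemma Mom_zero : Mom 0 = 1 := by
  simp [Mom]

lemma Mom_one : Mom 1 = 0 := by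
  rw [Mom_eq, show (∫ x : ℝ, x ^ 1 * Real.exp (-(2⁻¹) * x ^ 2)) = JJ 1 from rfl,
    JJ_odd 1 (by decide), mul_zero]

lemma Mom_three : Mom 3 = 0 := by
  rw [Mom_eq, show (∫ x : ℝ, x ^ 3 * Real.exp (-(2⁻¹) * x ^ 2)) = JJ 3 from rfl,
    JJ_odd 3 (by decide), mul_zero]

end

set_option linter.unusedSectionVars false

section Pi

variable {ι : Type*} [Fintype ι] [DecidableEq ι]

lemma pi_moment (m : ι → ℕ) :
    ∫ z : ι → ℝ, ∏ i, z i ^ m i ∂(Measure.pi fun _ : ι => gaussianReal 0 1)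
      = ∏ i, Mom (m i) := by
  letI : MeasureSpace ℝ := ⟨gaussianReal 0 1⟩
  haveI : SigmaFinite (volume : Measure ℝ) :=
    inferInstanceAs (SigmaFinite (gaussianReal 0 1))
  have h := MeasureTheory.integral_fintype_prod_eq_prod (𝕜 := ℝ) (fun i (x : ℝ) => x ^ m i)
    (μ := fun _ : ι => gaussianReal 0 1)
  exact h

lemma integrable_pi_monomial (m : ι → ℕ) :
    Integrable (fun z : ι → ℝ => ∏ i, z i ^ m i)
      (Measure.pi fun _ : ι => gaussianReal 0 1) := by
  letI : MeasureSpace ℝ := ⟨gaussianReal 0 1⟩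
  haveI : SigmaFinite (volume : Measure ℝ) :=
    inferInstanceAs (SigmaFinite (gaussianReal 0 1))
  have h := MeasureTheory.Integrable.fintype_prod (𝕜 := ℝ) (f := fun i (x : ℝ) => x ^ m i)
    (fun i => integrable_pow_gauss (m i))
  exact h

/-- multiplicity of `t` among `a, b, c, d` -/
def cnt (a b c d t : ι) : ℕ :=
  (if t = a then 1 else 0) + (if t = b then 1 else 0) +
  (if t = c then 1 else 0) + (if t = d then 1 else 0)

lemma monomial_eq (a b c d : ι) (z : ι → ℝ) :
    z a * z b * z c * z d = ∏ t, z t ^ cnt a b c d t := by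
  have h1 : ∀ e : ι, ∏ t, z t ^ (if t = e then 1 else 0) = z e := by
    intro e
    have : ∀ t : ι, z t ^ (if t = e then 1 else 0) = if t = e then z t else 1 := by
      intro t; split_ifs <;> simp
    simp_rw [this]
    simp [Finset.prod_ite_eq' Finset.univ e z]
  simp_rw [cnt, pow_add, Finset.prod_mul_distrib, h1]

lemma prod_pt1 (f : ι → ℝ) (a : ι) (h : ∀ t, t ≠ a → f t = 1) : ∏ t, f t = f a :=
  Finset.prod_eq_single a (fun b _ hb => h b hb) (fun h' => absurd (Finset.mem_univ a) h')

lemma prod_pt2 (f : ι → ℝ) (a b : ι) (hab : a ≠ b)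
    (h : ∀ t, t ≠ a → t ≠ b → f t = 1) : ∏ t, f t = f a * f b := by
  rw [← Finset.prod_pair hab]
  exact (Finset.prod_subset (Finset.subset_univ _) (fun t _ ht => by
    simp only [Finset.mem_insert, Finset.mem_singleton] at ht
    push_neg at ht
    exact h t ht.1 ht.2)).symm

end Pi
section Pi2

variable {ι : Type*} [Fintype ι] [DecidableEq ι]

/-- Product of moments equals the Wick pairing expression. -/
lemma prod_Mom_cnt (a b c d : ι) :
    ∏ t, Mom (cnt a b c d t)
      = (if a = b then (1:ℝ) else 0) * (if c = d then 1 else 0)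
      + (if a = c then (1:ℝ) else 0) * (if b = d then 1 else 0)
      + (if a = d then (1:ℝ) else 0) * (if b = c then 1 else 0) := by
  by_cases hab : a = b
  · subst hab
    by_cases hcd : c = d
    · subst hcd
      by_cases hac : a = c
      · subst hac
        -- all equal: Mom 4 = 3
        rw [prod_pt1 _ a (fun t ht => by simp [cnt, ht, Mom_zero])]
        simp [cnt, Mom_four]
        norm_num
      · -- pairs {a,a},{c,c}
        rw [prod_pt2 _ a c hac (fun t hta htc => by simp [cnt, hta, htc, Mom_zero])]
        simp [cnt, hac, Ne.symm hac, Mom_two]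
    · -- a=b, c≠d
      by_cases hac : a = c
      · subst hac
        -- {a,a,a,d}, a ≠ d
        rw [Finset.prod_eq_zero (Finset.mem_univ d)
          (by simp [cnt, Ne.symm hcd, Mom_one])]
        simp [hcd]
      · by_cases had : a = d
        · subst had
          rw [Finset.prod_eq_zero (Finset.mem_univ c)
            (by simp [cnt, Ne.symm hac, hcd, Mom_one])]
          simp [hac, hcd, Ne.symm hcd]
        · -- a∉{c,d}
          rw [Finset.prod_eq_zero (Finset.mem_univ c)
            (by simp [cnt, Ne.symm hac, hcd, Mom_one])]
          simp [hac, had, hcd]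
  · by_cases hcd : c = d
    · subst hcd
      by_cases hac : a = c
      · subst hac
        -- {a,b,a,a}, b ≠ a
        rw [Finset.prod_eq_zero (Finset.mem_univ b)
          (by simp [cnt, Ne.symm hab, Mom_one])]
        simp [hab, Ne.symm hab]
      · by_cases hbc : b = c
        · subst hbc
          rw [Finset.prod_eq_zero (Finset.mem_univ a)
            (by simp [cnt, hab, hac, Mom_one])]
          simp [hab, hac]
        · rw [Finset.prod_eq_zero (Finset.mem_univ a)
            (by simp [cnt, hab, hac, Mom_one])]
          simp [hab, hac, hbc]
    · -- a≠b, c≠d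
      by_cases hac : a = c
      · subst hac
        by_cases hbd : b = d
        · subst hbd
          -- {a,b,a,b}: Mom2 * Mom2
          rw [prod_pt2 _ a b hab (fun t hta htb => by simp [cnt, hta, htb, Mom_zero])]
          simp [cnt, hab, Ne.symm hab, Mom_two, hcd]
        · -- {a,b,a,d}: b appears once
          rw [Finset.prod_eq_zero (Finset.mem_univ b)
            (by simp [cnt, Ne.symm hab, hbd, Mom_one])]
          simp [hab, hbd, hcd]
      · by_cases had : a = d
        · subst had
          by_cases hbc : b = c
          · subst hbc
            rw [prod_pt2 _ a b hab (fun t hta htb => by simp [cnt, hta, htb, Mom_zero])]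
            simp [cnt, hab, Ne.symm hab, Mom_two, hcd]
          · rw [Finset.prod_eq_zero (Finset.mem_univ b)
              (by simp [cnt, Ne.symm hab, hbc, Mom_one])]
            simp [hab, hac, hbc, hcd]
        · -- a appears exactly once
          rw [Finset.prod_eq_zero (Finset.mem_univ a)
            (by simp [cnt, hab, hac, had, Mom_one])]
          simp [hab, hac, had]

lemma integral_monomial (a b c d : ι) :
    ∫ z : ι → ℝ, z a * z b * z c * z d ∂(Measure.pi fun _ : ι => gaussianReal 0 1)
      = (if a = b then (1:ℝ) else 0) * (if c = d then 1 else 0)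
      + (if a = c then (1:ℝ) else 0) * (if b = d then 1 else 0)
      + (if a = d then (1:ℝ) else 0) * (if b = c then 1 else 0) := by
  simp_rw [monomial_eq a b c d]
  rw [pi_moment, prod_Mom_cnt]

lemma integrable_monomial (a b c d : ι) :
    Integrable (fun z : ι → ℝ => z a * z b * z c * z d)
      (Measure.pi fun _ : ι => gaussianReal 0 1) := by
  have h := integrable_pi_monomial (ι := ι) (cnt a b c d)
  exact h.congr (Filter.Eventually.of_forall fun z => (monomial_eq a b c d z).symm)

end Pi2

section Sums

variable {α β : Type*} [Fintype α] [Fintype β] [DecidableEq α] [DecidableEq β]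

lemma sumT1 (C : β → β → ℝ) :
    ∑ l : α, ∑ k : β, ∑ m : β, ∑ l' : α, ∑ k' : β, ∑ m' : β,
      C k m * C k' m' * ((if k = m then (1:ℝ) else 0) * (if k' = m' then 1 else 0))
      = (Fintype.card α : ℝ)^2 * (∑ k, C k k)^2 := by
  simp [mul_ite, ite_mul, mul_zero, zero_mul, mul_one, Finset.sum_ite_eq, Finset.sum_ite_eq',
    Finset.sum_mul, Finset.mul_sum, Finset.sum_const]
  rw [sq (∑ k : β, C k k), Finset.sum_mul_sum]
  simp [Finset.mul_sum]
  exact Finset.sum_congr rfl fun _ _ => Finset.sum_congr rfl fun _ _ => by ring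

lemma sumT2 (C : β → β → ℝ) :
    ∑ l : α, ∑ k : β, ∑ m : β, ∑ l' : α, ∑ k' : β, ∑ m' : β,
      C k m * C k' m' * ((if l = l' then (1:ℝ) else 0) *
        ((if k = k' then (1:ℝ) else 0) * (if m = m' then 1 else 0)))
      = (Fintype.card α : ℝ) * ∑ k, ∑ m, C k m * C k m := by
  simp [mul_ite, ite_mul, mul_zero, zero_mul, mul_one, Finset.sum_ite_eq, Finset.sum_ite_eq',
    Finset.sum_mul, Finset.mul_sum, Finset.sum_const]

lemma sumT3 (C : β → β → ℝ) :
    ∑ l : α, ∑ k : β, ∑ m : β, ∑ l' : α, ∑ k' : β, ∑ m' : β,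
      C k m * C k' m' * ((if l = l' then (1:ℝ) else 0) *
        ((if k = m' then (1:ℝ) else 0) * (if m = k' then 1 else 0)))
      = (Fintype.card α : ℝ) * ∑ k, ∑ m, C k m * C m k := by
  simp [mul_ite, ite_mul, mul_zero, zero_mul, mul_one, Finset.sum_ite_eq, Finset.sum_ite_eq',
    Finset.sum_mul, Finset.mul_sum, Finset.sum_const]

end Sums

lemma ite_and_mul_one_zero {P Q : Prop} [Decidable P] [Decidable Q] :
    (if P ∧ Q then (1:ℝ) else 0) = (if P then (1:ℝ) else 0) * (if Q then 1 else 0) := by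
  split_ifs with h1 h2 h3 <;> simp_all

section Main

variable (N p : ℕ) (A : Matrix (Fin p) (Fin p) ℝ)

lemma trace_shift (Z : Matrix (Fin N) (Fin p) ℝ) :
    Matrix.trace (Aᵀ * Zᵀ * Z * A) = Matrix.trace (Z * (A * Aᵀ) * Zᵀ) := by
  rw [Matrix.trace_mul_comm (Aᵀ * Zᵀ * Z) A]
  rw [show A * (Aᵀ * Zᵀ * Z) = (A * Aᵀ * Zᵀ) * Z by simp [Matrix.mul_assoc]]
  rw [Matrix.trace_mul_comm (A * Aᵀ * Zᵀ) Z]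
  congr 1
  simp [Matrix.mul_assoc]

lemma trace_eq_sum (z : Fin N × Fin p → ℝ) :
    Matrix.trace (Aᵀ * (Matrix.of fun i j => z (i, j))ᵀ * (Matrix.of fun i j => z (i, j)) * A)
      = ∑ l : Fin N, ∑ k : Fin p, ∑ m : Fin p, z (l,k) * (A * Aᵀ) k m * z (l,m) := by
  rw [trace_shift]
  simp only [Matrix.trace, Matrix.diag, Matrix.mul_apply, Matrix.transpose_apply,
    Matrix.of_apply, Finset.sum_mul]
  exact Finset.sum_congr rfl fun l _ => Finset.sum_comm

end Main

section Expand

variable (N p : ℕ)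

noncomputable abbrev gmeas (N p : ℕ) : Measure (Fin N × Fin p → ℝ) :=
  Measure.pi fun _ : Fin N × Fin p => gaussianReal 0 1

lemma flat_sum (C : Fin p → Fin p → ℝ) (z : Fin N × Fin p → ℝ) :
    (∑ l : Fin N, ∑ k : Fin p, ∑ m : Fin p, z (l,k) * C k m * z (l,m))
      = ∑ u : Fin N × Fin p × Fin p, z (u.1, u.2.1) * C u.2.1 u.2.2 * z (u.1, u.2.2) := by
  rw [Fintype.sum_prod_type]
  exact Finset.sum_congr rfl fun l _ => by rw [Fintype.sum_prod_type]

lemma expand_integral (C : Fin p → Fin p → ℝ) :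
    ∫ z : Fin N × Fin p → ℝ,
        (∑ l : Fin N, ∑ k : Fin p, ∑ m : Fin p, z (l,k) * C k m * z (l,m))^2 ∂(gmeas N p)
      = ∑ l : Fin N, ∑ k : Fin p, ∑ m : Fin p, ∑ l' : Fin N, ∑ k' : Fin p, ∑ m' : Fin p,
          C k m * C k' m' *
          ((if ((l,k) : Fin N × Fin p) = (l,m) then (1:ℝ) else 0) *
              (if ((l',k') : Fin N × Fin p) = (l',m') then 1 else 0)
           + (if ((l,k) : Fin N × Fin p) = (l',k') then (1:ℝ) else 0) *
              (if ((l,m) : Fin N × Fin p) = (l',m') then 1 else 0)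
           + (if ((l,k) : Fin N × Fin p) = (l',m') then (1:ℝ) else 0) *
              (if ((l,m) : Fin N × Fin p) = (l',k') then 1 else 0)) := by
  classical
  have hsq : ∀ z : Fin N × Fin p → ℝ,
      (∑ l : Fin N, ∑ k : Fin p, ∑ m : Fin p, z (l,k) * C k m * z (l,m))^2
        = ∑ w : (Fin N × Fin p × Fin p) × (Fin N × Fin p × Fin p), (C w.1.2.1 w.1.2.2 * C w.2.2.1 w.2.2.2) *
            (z (w.1.1, w.1.2.1) * z (w.1.1, w.1.2.2) *
             z (w.2.1, w.2.2.1) * z (w.2.1, w.2.2.2)) := by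
    intro z
    rw [flat_sum, sq, Finset.sum_mul_sum]
    simp only [Fintype.sum_prod_type]
    refine Fintype.sum_congr _ _ fun l => ?_
    refine Fintype.sum_congr _ _ fun k => ?_
    refine Fintype.sum_congr _ _ fun m => ?_
    refine Fintype.sum_congr _ _ fun l' => ?_
    refine Fintype.sum_congr _ _ fun k' => ?_
    refine Fintype.sum_congr _ _ fun m' => ?_
    ring
  simp_rw [hsq]
  rw [integral_finset_sum _ (fun w _ => ((integrable_monomial
      (w.1.1, w.1.2.1) (w.1.1, w.1.2.2) (w.2.1, w.2.2.1) (w.2.1, w.2.2.2)).const_mul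
      (C w.1.2.1 w.1.2.2 * C w.2.2.1 w.2.2.2)))]
  have hval : ∀ w : (Fin N × Fin p × Fin p) × (Fin N × Fin p × Fin p),
      (∫ z : Fin N × Fin p → ℝ, (C w.1.2.1 w.1.2.2 * C w.2.2.1 w.2.2.2) *
            (z (w.1.1, w.1.2.1) * z (w.1.1, w.1.2.2) *
             z (w.2.1, w.2.2.1) * z (w.2.1, w.2.2.2)) ∂(gmeas N p))
        = C w.1.2.1 w.1.2.2 * C w.2.2.1 w.2.2.2 *
          ((if (w.1.1, w.1.2.1) = (w.1.1, w.1.2.2) then (1:ℝ) else 0) *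
              (if (w.2.1, w.2.2.1) = (w.2.1, w.2.2.2) then 1 else 0)
           + (if (w.1.1, w.1.2.1) = (w.2.1, w.2.2.1) then (1:ℝ) else 0) *
              (if (w.1.1, w.1.2.2) = (w.2.1, w.2.2.2) then 1 else 0)
           + (if (w.1.1, w.1.2.1) = (w.2.1, w.2.2.2) then (1:ℝ) else 0) *
              (if (w.1.1, w.1.2.2) = (w.2.1, w.2.2.1) then 1 else 0)) := by
    intro w
    rw [integral_const_mul, integral_monomial]
  simp_rw [hval]
  simp only [Fintype.sum_prod_type]

end Expand

section MatrixLemmas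

variable {p : ℕ} (A : Matrix (Fin p) (Fin p) ℝ)

lemma trC_eq : (∑ k, (A * Aᵀ) k k) = Matrix.trace (Aᵀ * A) := by
  rw [← Matrix.trace_mul_comm]
  rfl

lemma frob_eq : (∑ k, ∑ m, (A * Aᵀ) k m * (A * Aᵀ) k m)
    = Matrix.trace ((Aᵀ * A)ᵀ * (Aᵀ * A)) := by
  have h1 : (∑ k, ∑ m, (A * Aᵀ) k m * (A * Aᵀ) k m)
      = Matrix.trace ((A * Aᵀ) * (A * Aᵀ)ᵀ) := by
    simp [Matrix.trace, Matrix.diag, Matrix.mul_apply, Matrix.transpose_apply]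
    refine Fintype.sum_congr _ _ fun k => Fintype.sum_congr _ _ fun m => ?_
    congr 1
    exact Finset.sum_congr rfl fun i _ => mul_comm _ _
  rw [h1, Matrix.transpose_mul, Matrix.transpose_transpose, Matrix.transpose_mul,
    Matrix.transpose_transpose]
  rw [show A * Aᵀ * (A * Aᵀ) = A * (Aᵀ * A * Aᵀ) by simp [Matrix.mul_assoc],
    Matrix.trace_mul_comm A (Aᵀ * A * Aᵀ)]
  congr 1
  simp [Matrix.mul_assoc]

lemma symC : (∑ k, ∑ m, (A * Aᵀ) k m * (A * Aᵀ) m k)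
    = ∑ k, ∑ m, (A * Aᵀ) k m * (A * Aᵀ) k m := by
  have h : ∀ k m, (A * Aᵀ) m k = (A * Aᵀ) k m := by
    intro k m
    simp [Matrix.mul_apply, Matrix.transpose_apply, mul_comm]
  exact Fintype.sum_congr _ _ fun k => Fintype.sum_congr _ _ fun m => by rw [h k m]

lemma frob_nonneg : 0 ≤ Matrix.trace ((Aᵀ * A)ᵀ * (Aᵀ * A)) := by
  rw [← frob_eq]
  exact Finset.sum_nonneg fun k _ => Finset.sum_nonneg fun m _ => mul_self_nonneg _

lemma frob_le_sq_trace :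
    Matrix.trace ((Aᵀ * A)ᵀ * (Aᵀ * A)) ≤ (Matrix.trace (Aᵀ * A)) ^ 2 := by
  have h1 : Matrix.trace ((Aᵀ * A)ᵀ * (Aᵀ * A))
      = ∑ j, ∑ k, ((Aᵀ * A) k j) ^ 2 := by
    simp [Matrix.trace, Matrix.diag, Matrix.mul_apply, Matrix.transpose_apply, sq]
    refine Fintype.sum_congr _ _ fun j => Fintype.sum_congr _ _ fun k => ?_
    congr 1
    exact Finset.sum_congr rfl fun i _ => mul_comm _ _
  have h2 : (Matrix.trace (Aᵀ * A)) ^ 2 = ∑ j, ∑ k, (Aᵀ * A) k k * (Aᵀ * A) j j := by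
    rw [sq, Matrix.trace, Finset.sum_mul_sum]
    exact Finset.sum_congr rfl fun j _ => Finset.sum_congr rfl fun k _ => by
      simp [Matrix.diag]; ring
  rw [h1, h2]
  refine Finset.sum_le_sum fun j _ => Finset.sum_le_sum fun k _ => ?_
  have hcs := Finset.sum_mul_sq_le_sq_mul_sq Finset.univ
    (fun i => A i k) (fun i => A i j)
  simp only [Matrix.mul_apply, Matrix.transpose_apply]
  calc (∑ i, A i k * A i j) ^ 2 ≤ (∑ i, (A i k)^2) * (∑ i, (A i j)^2) := hcs
    _ = (∑ i, A i k * A i k) * (∑ i, A i j * A i j) := by simp [sq]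

end MatrixLemmas

lemma delta_combine {α β : Type*} [DecidableEq α] [DecidableEq β]
    (l l' : α) (k m k' m' : β) :
    ((if ((l,k) : α × β) = (l,m) then (1:ℝ) else 0) *
        (if ((l',k') : α × β) = (l',m') then 1 else 0)
     + (if ((l,k) : α × β) = (l',k') then (1:ℝ) else 0) *
        (if ((l,m) : α × β) = (l',m') then 1 else 0)
     + (if ((l,k) : α × β) = (l',m') then (1:ℝ) else 0) *
        (if ((l,m) : α × β) = (l',k') then 1 else 0))
    = (if k = m then (1:ℝ) else 0) * (if k' = m' then 1 else 0)
      + (if l = l' then (1:ℝ) else 0) *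
          ((if k = k' then (1:ℝ) else 0) * (if m = m' then 1 else 0))
      + (if l = l' then (1:ℝ) else 0) *
          ((if k = m' then (1:ℝ) else 0) * (if m = k' then 1 else 0)) := by
  by_cases h1 : l = l' <;> by_cases h2 : k = m <;> by_cases h3 : k' = m' <;>
    by_cases h4 : k = k' <;> by_cases h5 : m = m' <;> by_cases h6 : k = m' <;>
    by_cases h7 : m = k' <;> simp_all [Prod.ext_iff]

/-- For `Z ∈ ℝ^{N×p}` with i.i.d. standard Gaussian entries and `A ∈ ℝ^{p×p}`:
`E‖ZA‖_F⁴ ≤ 4N‖AᵀA‖_F² + N²‖A‖_F⁴ ≤ 5N²‖A‖_F⁴`, where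
`‖ZA‖_F² = tr(Aᵀ Zᵀ Z A)`. -/
theorem gaussian_matrix_frobenius_fourth_moment (N p : ℕ) (A : Matrix (Fin p) (Fin p) ℝ) :
    (∫ z : Fin N × Fin p → ℝ,
        (Matrix.trace (Aᵀ * (Matrix.of fun i j => z (i, j))ᵀ *
            (Matrix.of fun i j => z (i, j)) * A)) ^ 2
        ∂(Measure.pi fun _ : Fin N × Fin p => gaussianReal 0 1))
      ≤ 4 * N * Matrix.trace ((Aᵀ * A)ᵀ * (Aᵀ * A))
          + N ^ 2 * (Matrix.trace (Aᵀ * A)) ^ 2 ∧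
    4 * N * Matrix.trace ((Aᵀ * A)ᵀ * (Aᵀ * A)) + N ^ 2 * (Matrix.trace (Aᵀ * A)) ^ 2
      ≤ 5 * N ^ 2 * (Matrix.trace (Aᵀ * A)) ^ 2 := by
  classical
  have key : (∫ z : Fin N × Fin p → ℝ,
      (Matrix.trace (Aᵀ * (Matrix.of fun i j => z (i, j))ᵀ *
          (Matrix.of fun i j => z (i, j)) * A)) ^ 2
      ∂(Measure.pi fun _ : Fin N × Fin p => gaussianReal 0 1))
      = (N:ℝ)^2 * (Matrix.trace (Aᵀ * A))^2
        + (N:ℝ) * Matrix.trace ((Aᵀ * A)ᵀ * (Aᵀ * A))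
        + (N:ℝ) * Matrix.trace ((Aᵀ * A)ᵀ * (Aᵀ * A)) := by
    simp_rw [trace_eq_sum N p A]
    rw [expand_integral N p (fun k m => (A * Aᵀ) k m)]
    simp_rw [delta_combine, mul_add]
    simp only [Finset.sum_add_distrib]
    erw [sumT1, sumT2, sumT3]
    rw [trC_eq, symC, frob_eq]
    simp [Fintype.card_fin]
  constructor
  · rw [key]
    have h1 := frob_nonneg A
    have h2 : (0:ℝ) ≤ (N:ℝ) := Nat.cast_nonneg N
    nlinarith
  · have h1 := frob_le_sq_trace A
    have h2 : (0:ℝ) ≤ (N:ℝ) := Nat.cast_nonneg N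
    have h3 : (N:ℝ) ≤ (N:ℝ)^2 := by
      have : N ≤ N^2 := Nat.le_self_pow two_ne_zero N
      calc (N:ℝ) ≤ ((N^2 : ℕ) : ℝ) := by exact_mod_cast this
        _ = (N:ℝ)^2 := by push_cast; ring
    have h4 := frob_nonneg A
    nlinarith
end
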